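/- Each dressed Gauss operator and each flux operator maps the zero-flux subspace into itself, and any two of the stabilizer generators (dressed Gauss operators of any colours and flux operators of any colours) commute when restricted to the zero-flux subspace. Moreover every vector ψ of the code space is supported on zero-flux configurations (ψ(a,b,c) = 0 unless da = 0, db = 0 and dc = 0), so all stabilizer generators pairwise commute on the code space (Lemma 3, conclusion: the stabilizers commute on the zero-flux subspace B = 1). -/

import Mathlib

noncomputable section

open scoped BigOperators

/-- Transport a cochain along an equality of degrees. -/
def cellCast {cells : ℕ → Type} {i j : ℕ} (h : i = j) (x : cells i → ZMod 2) :
    cells j → ZMod 2 :=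
  fun σ => x (cast (congrArg cells h.symm) σ)

/-- A *cochain system* of dimension `N` over `𝔽₂ = ZMod 2`: finite sets of cells in
each degree, `𝔽₂`-linear coboundary maps `d` with `d ∘ d = 0`, `𝔽₂`-bilinear associative
cup products satisfying the Leibniz rule, and an `𝔽₂`-linear integral on top-degree
cochains satisfying the Stokes identity.  (These are the structures carried by the `𝔽₂`
cellular cochains of a closed Poincaré CW complex.) -/
structure CochainSystem (N : ℕ) where
  cells : ℕ → Type
  fintypeCells : ∀ i, Fintype (cells i)
  decEqCells : ∀ i, DecidableEq (cells i)
  d : ∀ i, (cells i → ZMod 2) →ₗ[ZMod 2] (cells (i + 1) → ZMod 2)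
  cup : ∀ i j, (cells i → ZMod 2) →ₗ[ZMod 2]
    ((cells j → ZMod 2) →ₗ[ZMod 2] (cells (i + j) → ZMod 2))
  integ : (cells N → ZMod 2) →ₗ[ZMod 2] ZMod 2
  d_comp_d : ∀ (i : ℕ) (x : cells i → ZMod 2), d (i + 1) (d i x) = 0
  cup_assoc : ∀ {i j k : ℕ} (u : cells i → ZMod 2) (v : cells j → ZMod 2)
    (w : cells k → ZMod 2),
    cup (i + j) k (cup i j u v) w
      = cellCast (Nat.add_assoc i j k).symm (cup i (j + k) u (cup j k v w))
  leibniz : ∀ {i j : ℕ} (u : cells i → ZMod 2) (v : cells j → ZMod 2),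
    d (i + j) (cup i j u v)
      = cellCast (by omega : i + 1 + j = i + j + 1) (cup (i + 1) j (d i u) v)
        + cellCast (by omega : i + (j + 1) = i + j + 1) (cup i (j + 1) u (d j v))
  stokes : ∀ (k : ℕ) (hk : k + 1 = N) (w : cells k → ZMod 2),
    integ (cellCast hk (d k w)) = 0

attribute [instance] CochainSystem.fintypeCells CochainSystem.decEqCells

namespace CochainSystem

variable {N : ℕ}

/-- The degree-`i` cochain space `Cⁱ`. -/
abbrev C (S : CochainSystem N) (i : ℕ) : Type := S.cells i → ZMod 2

/-- The indicator cochain `σ̃` of a cell `σ`. -/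
def indicator (S : CochainSystem N) {i : ℕ} (σ : S.cells i) : S.C i :=
  fun τ => if τ = σ then 1 else 0

/-- `∫ (u ∪ v) ∪ w` when the degrees add up to `N`. -/
def integ3 (S : CochainSystem N) {i j k : ℕ} (h : i + j + k = N)
    (u : S.C i) (v : S.C j) (w : S.C k) : ZMod 2 :=
  S.integ (cellCast h (S.cup (i + j) k (S.cup i j u v) w))

end CochainSystem

/-- The sign `(-1)ᵗ ∈ ℂ` of `t ∈ 𝔽₂`. -/
def sgn (t : ZMod 2) : ℂ := (-1 : ℂ) ^ t.val

open CochainSystem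

section Twisted

variable {N p q s : ℕ}

/-- A configuration of `ℤ₂`-gauge fields for the three colours `r`, `b`, `g`. -/
abbrev Config (S : CochainSystem N) (p q s : ℕ) : Type :=
  S.C (p + 1) × S.C (q + 1) × S.C (s + 1)

/-- The three-colour qubit space `V = ((Cᵖ × C^q × C^s) → ℂ)` of the twisted code. -/
abbrev QSpace (S : CochainSystem N) (p q s : ℕ) : Type := Config S p q s → ℂ

/-- The dressed Gauss operator `Ã^r_σ` of the twisted code:
`(Ã^r_σ ψ)(a,b,c) = (−1)^{∫ σ̃ ∪ b ∪ c} ψ(a + dσ̃, b, c)`. -/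
def gaussR (S : CochainSystem N) (h : p + 1 + (q + 1) + (s + 1) = N + 1)
    (σ : S.cells p) : QSpace S p q s → QSpace S p q s :=
  fun ψ x =>
    sgn (S.integ3 (show p + (q + 1) + (s + 1) = N by omega) (S.indicator σ) x.2.1 x.2.2)
      * ψ (x.1 + S.d p (S.indicator σ), x.2.1, x.2.2)

/-- The dressed Gauss operator `Ã^b_ξ`:
`(Ã^b_ξ ψ)(a,b,c) = (−1)^{∫ a ∪ ξ̃ ∪ c} ψ(a, b + dξ̃, c)`. -/
def gaussB (S : CochainSystem N) (h : p + 1 + (q + 1) + (s + 1) = N + 1)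
    (ξ : S.cells q) : QSpace S p q s → QSpace S p q s :=
  fun ψ x =>
    sgn (S.integ3 (show p + 1 + q + (s + 1) = N by omega) x.1 (S.indicator ξ) x.2.2)
      * ψ (x.1, x.2.1 + S.d q (S.indicator ξ), x.2.2)

/-- The dressed Gauss operator `Ã^g_ζ`:
`(Ã^g_ζ ψ)(a,b,c) = (−1)^{∫ a ∪ b ∪ ζ̃} ψ(a, b, c + dζ̃)`. -/
def gaussG (S : CochainSystem N) (h : p + 1 + (q + 1) + (s + 1) = N + 1)
    (ζ : S.cells s) : QSpace S p q s → QSpace S p q s :=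
  fun ψ x =>
    sgn (S.integ3 (show p + 1 + (q + 1) + s = N by omega) x.1 x.2.1 (S.indicator ζ))
      * ψ (x.1, x.2.1, x.2.2 + S.d s (S.indicator ζ))

/-- The diagonal flux operator `B^r_τ`, multiplying `ψ(a,b,c)` by `(−1)^{(da)(τ)}`. -/
def fluxR (S : CochainSystem N) (p q s : ℕ) (τ : S.cells (p + 2)) :
    QSpace S p q s → QSpace S p q s :=
  fun ψ x => sgn (S.d (p + 1) x.1 τ) * ψ x

/-- The diagonal flux operator `B^b_τ′`, multiplying `ψ(a,b,c)` by `(−1)^{(db)(τ′)}`. -/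
def fluxB (S : CochainSystem N) (p q s : ℕ) (τ' : S.cells (q + 2)) :
    QSpace S p q s → QSpace S p q s :=
  fun ψ x => sgn (S.d (q + 1) x.2.1 τ') * ψ x

/-- The diagonal flux operator `B^g_τ″`, multiplying `ψ(a,b,c)` by `(−1)^{(dc)(τ″)}`. -/
def fluxG (S : CochainSystem N) (p q s : ℕ) (τ'' : S.cells (s + 2)) :
    QSpace S p q s → QSpace S p q s :=
  fun ψ x => sgn (S.d (s + 1) x.2.2 τ'') * ψ x

/-- The zero-flux subspace: vectors supported on flat (cocycle) configurations. -/
def ZeroFlux (S : CochainSystem N) (p q s : ℕ) : Set (QSpace S p q s) :=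
  {ψ | ∀ x : Config S p q s, ψ x ≠ 0 →
    S.d (p + 1) x.1 = 0 ∧ S.d (q + 1) x.2.1 = 0 ∧ S.d (s + 1) x.2.2 = 0}

/-- The code space of the twisted code: vectors fixed by every dressed Gauss operator
and every flux operator. -/
def CodeSpace (S : CochainSystem N) (h : p + 1 + (q + 1) + (s + 1) = N + 1) :
    Set (QSpace S p q s) :=
  {ψ | (∀ σ : S.cells p, gaussR S h σ ψ = ψ)
    ∧ (∀ ξ : S.cells q, gaussB S h ξ ψ = ψ)
    ∧ (∀ ζ : S.cells s, gaussG S h ζ ψ = ψ)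
    ∧ (∀ τ : S.cells (p + 2), fluxR S p q s τ ψ = ψ)
    ∧ (∀ τ' : S.cells (q + 2), fluxB S p q s τ' ψ = ψ)
    ∧ (∀ τ'' : S.cells (s + 2), fluxG S p q s τ'' ψ = ψ)}

/-- The set of stabilizer generators of the twisted code. -/
def Stabilizer (S : CochainSystem N) (h : p + 1 + (q + 1) + (s + 1) = N + 1) :
    Set (QSpace S p q s → QSpace S p q s) :=
  {O | (∃ σ, O = gaussR S h σ) ∨ (∃ ξ, O = gaussB S h ξ) ∨ (∃ ζ, O = gaussG S h ζ)
    ∨ (∃ τ, O = fluxR S p q s τ) ∨ (∃ τ', O = fluxB S p q s τ')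
    ∨ (∃ τ'', O = fluxG S p q s τ'')}

end Twisted

section Aux

open CochainSystem

variable {N : ℕ}

@[simp] lemma cellCast_rfl {cells : ℕ → Type} {i : ℕ} (x : cells i → ZMod 2) :
    cellCast (rfl : i = i) x = x := rfl

lemma cellCast_comp {cells : ℕ → Type} {i j k : ℕ} (h1 : i = j) (h2 : j = k)
    (x : cells i → ZMod 2) :
    cellCast h2 (cellCast h1 x) = cellCast (h1.trans h2) x := by
  subst h1; subst h2; rfl

lemma cellCast_add {cells : ℕ → Type} {i j : ℕ} (h : i = j) (x y : cells i → ZMod 2) :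
    cellCast h (x + y) = cellCast h x + cellCast h y := by
  subst h; rfl

lemma cup_cellCast_left (S : CochainSystem N) {m m' k : ℕ} (h : m = m')
    (x : S.C m) (w : S.C k) :
    S.cup m' k (cellCast h x) w
      = cellCast (by rw [h] : m + k = m' + k) (S.cup m k x w) := by
  subst h; rfl

lemma d_shift (S : CochainSystem N) {i : ℕ} (a : S.C (i + 1)) (u : S.C i) :
    S.d (i + 1) (a + S.d i u) = S.d (i + 1) a := by
  rw [map_add, S.d_comp_d, add_zero]

lemma integ3_add_left (S : CochainSystem N) {i j k : ℕ} (h : i + j + k = N)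
    (u u' : S.C i) (v : S.C j) (w : S.C k) :
    S.integ3 h (u + u') v w = S.integ3 h u v w + S.integ3 h u' v w := by
  simp only [CochainSystem.integ3, map_add, LinearMap.add_apply, cellCast_add]

lemma integ3_add_mid (S : CochainSystem N) {i j k : ℕ} (h : i + j + k = N)
    (u : S.C i) (v v' : S.C j) (w : S.C k) :
    S.integ3 h u (v + v') w = S.integ3 h u v w + S.integ3 h u v' w := by
  simp only [CochainSystem.integ3, map_add, LinearMap.add_apply, cellCast_add]

lemma integ3_add_right (S : CochainSystem N) {i j k : ℕ} (h : i + j + k = N)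
    (u : S.C i) (v : S.C j) (w w' : S.C k) :
    S.integ3 h u v (w + w') = S.integ3 h u v w + S.integ3 h u v w' := by
  simp only [CochainSystem.integ3, map_add, LinearMap.add_apply, cellCast_add]

lemma cellCast_zero {cells : ℕ → Type} {i j : ℕ} (h : i = j) :
    cellCast h (0 : cells i → ZMod 2) = 0 := by subst h; rfl

lemma integ3_zero_left (S : CochainSystem N) {i j k : ℕ} (h : i + j + k = N)
    (v : S.C j) (w : S.C k) : S.integ3 h 0 v w = 0 := by
  simp only [CochainSystem.integ3, map_zero, LinearMap.zero_apply, cellCast_zero]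

lemma integ3_zero_mid (S : CochainSystem N) {i j k : ℕ} (h : i + j + k = N)
    (u : S.C i) (w : S.C k) : S.integ3 h u 0 w = 0 := by
  simp only [CochainSystem.integ3, map_zero, LinearMap.zero_apply, cellCast_zero]

lemma integ3_zero_right (S : CochainSystem N) {i j k : ℕ} (h : i + j + k = N)
    (u : S.C i) (v : S.C j) : S.integ3 h u v 0 = 0 := by
  simp only [CochainSystem.integ3, map_zero, cellCast_zero]

lemma key3 (S : CochainSystem N) {i j k : ℕ}
    (h1 : i + 1 + j + k = N) (h2 : i + (j + 1) + k = N) (h3 : i + j + (k + 1) = N)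
    (u : S.C i) (v : S.C j) (w : S.C k) :
    S.integ3 h1 (S.d i u) v w + S.integ3 h2 u (S.d j v) w
      + S.integ3 h3 u v (S.d k w) = 0 := by
  have hk : i + j + k + 1 = N := by omega
  have hst := S.stokes (i + j + k) hk (S.cup (i + j) k (S.cup i j u v) w)
  rw [S.leibniz] at hst
  rw [S.leibniz] at hst
  simp only [map_add, LinearMap.add_apply, cup_cellCast_left, cellCast_add,
    cellCast_comp] at hst
  simp only [CochainSystem.integ3]
  exact hst

lemma sgn_add (t₁ t₂ : ZMod 2) : sgn (t₁ + t₂) = sgn t₁ * sgn t₂ := by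
  have h2 : ZMod.val (2 : ZMod 2) = 0 := by decide
  have h1 : ZMod.val (1 : ZMod 2) = 1 := by decide
  rcases (by decide : ∀ x : ZMod 2, x = 0 ∨ x = 1) t₁ with rfl | rfl <;>
    rcases (by decide : ∀ x : ZMod 2, x = 0 ∨ x = 1) t₂ with rfl | rfl <;> simp [sgn] <;> norm_num [h1, h2]

lemma sgn_eq_one_iff (t : ZMod 2) : sgn t = 1 ↔ t = 0 := by
  have h1 : ZMod.val (1 : ZMod 2) = 1 := by decide
  rcases (by decide : ∀ x : ZMod 2, x = 0 ∨ x = 1) t with rfl | rfl <;> simp [sgn, h1] <;> norm_num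

lemma zmod2_add_eq_zero {a b : ZMod 2} (h : a + b = 0) : a = b := by
  revert h; revert a b; decide

end Aux

section Comm

open CochainSystem

variable {N p q s : ℕ} (S : CochainSystem N) (h : p + 1 + (q + 1) + (s + 1) = N + 1)

lemma cRR (σ σ' : S.cells p) (ψ : QSpace S p q s) :
    gaussR S h σ (gaussR S h σ' ψ) = gaussR S h σ' (gaussR S h σ ψ) := by
  funext x
  simp only [gaussR]
  rw [add_right_comm]
  ring

lemma cBB (ξ ξ' : S.cells q) (ψ : QSpace S p q s) :
    gaussB S h ξ (gaussB S h ξ' ψ) = gaussB S h ξ' (gaussB S h ξ ψ) := by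
  funext x
  simp only [gaussB]
  rw [add_right_comm]
  ring

lemma cGG (ζ ζ' : S.cells s) (ψ : QSpace S p q s) :
    gaussG S h ζ (gaussG S h ζ' ψ) = gaussG S h ζ' (gaussG S h ζ ψ) := by
  funext x
  simp only [gaussG]
  rw [add_right_comm]
  ring

lemma cRB (σ : S.cells p) (ξ : S.cells q) (ψ : QSpace S p q s)
    (hψ : ψ ∈ ZeroFlux S p q s) :
    gaussR S h σ (gaussB S h ξ ψ) = gaussB S h ξ (gaussR S h σ ψ) := by
  funext x
  obtain ⟨a, b, c⟩ := x
  simp only [gaussR, gaussB]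
  by_cases hz : ψ (a + S.d p (S.indicator σ), b + S.d q (S.indicator ξ), c) = 0
  · rw [hz]; ring
  · obtain ⟨-, -, hc⟩ := hψ _ hz
    have hkey := key3 S (by omega) (by omega) (by omega)
      (S.indicator σ) (S.indicator ξ) c
    rw [hc, integ3_zero_right, add_zero] at hkey
    have hEq := zmod2_add_eq_zero hkey
    rw [integ3_add_left, integ3_add_mid, sgn_add, sgn_add, hEq]
    ring

lemma cRG (σ : S.cells p) (ζ : S.cells s) (ψ : QSpace S p q s)
    (hψ : ψ ∈ ZeroFlux S p q s) :
    gaussR S h σ (gaussG S h ζ ψ) = gaussG S h ζ (gaussR S h σ ψ) := by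
  funext x
  obtain ⟨a, b, c⟩ := x
  simp only [gaussR, gaussG]
  by_cases hz : ψ (a + S.d p (S.indicator σ), b, c + S.d s (S.indicator ζ)) = 0
  · rw [hz]; ring
  · obtain ⟨-, hb, -⟩ := hψ _ hz
    have hkey := key3 S (by omega) (by omega) (by omega)
      (S.indicator σ) b (S.indicator ζ)
    rw [hb, integ3_zero_mid, add_zero] at hkey
    have hEq := zmod2_add_eq_zero hkey
    rw [integ3_add_left, integ3_add_right, sgn_add, sgn_add, hEq]
    ring

lemma cBG (ξ : S.cells q) (ζ : S.cells s) (ψ : QSpace S p q s)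
    (hψ : ψ ∈ ZeroFlux S p q s) :
    gaussB S h ξ (gaussG S h ζ ψ) = gaussG S h ζ (gaussB S h ξ ψ) := by
  funext x
  obtain ⟨a, b, c⟩ := x
  simp only [gaussB, gaussG]
  by_cases hz : ψ (a, b + S.d q (S.indicator ξ), c + S.d s (S.indicator ζ)) = 0
  · rw [hz]; ring
  · obtain ⟨ha, -, -⟩ := hψ _ hz
    have hkey := key3 S (by omega) (by omega) (by omega)
      a (S.indicator ξ) (S.indicator ζ)
    rw [ha, integ3_zero_left, zero_add] at hkey
    have hEq := zmod2_add_eq_zero hkey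
    rw [integ3_add_mid, integ3_add_right, sgn_add, sgn_add, hEq]
    ring

end Comm


section Parts
open CochainSystem
variable {N p q s : ℕ} (S : CochainSystem N) (h : p + 1 + (q + 1) + (s + 1) = N + 1)

lemma presR (σ : S.cells p) (ψ : QSpace S p q s) (hψ : ψ ∈ ZeroFlux S p q s) :
    gaussR S h σ ψ ∈ ZeroFlux S p q s := by
  intro x hx
  simp only [gaussR] at hx
  have hz : ψ (x.1 + S.d p (S.indicator σ), x.2.1, x.2.2) ≠ 0 :=
    fun h0 => hx (by rw [h0, mul_zero])
  obtain ⟨h1, h2, h3⟩ := hψ _ hz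
  rw [d_shift] at h1
  exact ⟨h1, h2, h3⟩

lemma presB (ξ : S.cells q) (ψ : QSpace S p q s) (hψ : ψ ∈ ZeroFlux S p q s) :
    gaussB S h ξ ψ ∈ ZeroFlux S p q s := by
  intro x hx
  simp only [gaussB] at hx
  have hz : ψ (x.1, x.2.1 + S.d q (S.indicator ξ), x.2.2) ≠ 0 :=
    fun h0 => hx (by rw [h0, mul_zero])
  obtain ⟨h1, h2, h3⟩ := hψ _ hz
  rw [d_shift] at h2
  exact ⟨h1, h2, h3⟩

lemma presG (ζ : S.cells s) (ψ : QSpace S p q s) (hψ : ψ ∈ ZeroFlux S p q s) :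
    gaussG S h ζ ψ ∈ ZeroFlux S p q s := by
  intro x hx
  simp only [gaussG] at hx
  have hz : ψ (x.1, x.2.1, x.2.2 + S.d s (S.indicator ζ)) ≠ 0 :=
    fun h0 => hx (by rw [h0, mul_zero])
  obtain ⟨h1, h2, h3⟩ := hψ _ hz
  rw [d_shift] at h3
  exact ⟨h1, h2, h3⟩

end Parts

/-- **Lemma 3 (conclusion).** Each dressed Gauss operator and each flux operator maps
the zero-flux subspace into itself, and any two stabilizer generators commute when
restricted to the zero-flux subspace.  Moreover every vector of the code space is
supported on zero-flux configurations, so all stabilizer generators pairwise commute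
on the code space. -/
theorem stabilizers_commute_on_zero_flux
    {N p q s : ℕ} (S : CochainSystem N) (h : p + 1 + (q + 1) + (s + 1) = N + 1) :
    (∀ O ∈ Stabilizer S h, ∀ ψ ∈ ZeroFlux S p q s, O ψ ∈ ZeroFlux S p q s) ∧
    (∀ O₁ ∈ Stabilizer S h, ∀ O₂ ∈ Stabilizer S h, ∀ ψ ∈ ZeroFlux S p q s,
      O₁ (O₂ ψ) = O₂ (O₁ ψ)) ∧
    (∀ ψ ∈ CodeSpace S h, ψ ∈ ZeroFlux S p q s) ∧
    (∀ O₁ ∈ Stabilizer S h, ∀ O₂ ∈ Stabilizer S h, ∀ ψ ∈ CodeSpace S h,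
      O₁ (O₂ ψ) = O₂ (O₁ ψ)) := by
  have hpres : ∀ O ∈ Stabilizer S h, ∀ ψ ∈ ZeroFlux S p q s, O ψ ∈ ZeroFlux S p q s := by
    rintro O (⟨σ, rfl⟩ | ⟨ξ, rfl⟩ | ⟨ζ, rfl⟩ | ⟨τ, rfl⟩ | ⟨τ', rfl⟩ | ⟨τ'', rfl⟩) ψ hψ
    · exact presR S h σ ψ hψ
    · exact presB S h ξ ψ hψ
    · exact presG S h ζ ψ hψ
    · exact fun x hx => hψ _ (fun h0 => hx (by simp only [fluxR, h0, mul_zero]))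
    · exact fun x hx => hψ _ (fun h0 => hx (by simp only [fluxB, h0, mul_zero]))
    · exact fun x hx => hψ _ (fun h0 => hx (by simp only [fluxG, h0, mul_zero]))
  have hcomm : ∀ O₁ ∈ Stabilizer S h, ∀ O₂ ∈ Stabilizer S h, ∀ ψ ∈ ZeroFlux S p q s,
      O₁ (O₂ ψ) = O₂ (O₁ ψ) := by
    rintro O₁ (⟨σ, rfl⟩ | ⟨ξ, rfl⟩ | ⟨ζ, rfl⟩ | ⟨τ, rfl⟩ | ⟨τ', rfl⟩ | ⟨τ'', rfl⟩)
      O₂ (⟨σ₂, rfl⟩ | ⟨ξ₂, rfl⟩ | ⟨ζ₂, rfl⟩ | ⟨τ₂, rfl⟩ | ⟨τ'₂, rfl⟩ | ⟨τ''₂, rfl⟩) ψ hψ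
    · exact cRR S h σ σ₂ ψ
    · exact cRB S h σ ξ₂ ψ hψ
    · exact cRG S h σ ζ₂ ψ hψ
    · funext x
      obtain ⟨a, b, c⟩ := x
      simp only [gaussR, gaussB, gaussG, fluxR, fluxB, fluxG, d_shift]
      ring
    · funext x
      obtain ⟨a, b, c⟩ := x
      simp only [gaussR, gaussB, gaussG, fluxR, fluxB, fluxG, d_shift]
      ring
    · funext x
      obtain ⟨a, b, c⟩ := x
      simp only [gaussR, gaussB, gaussG, fluxR, fluxB, fluxG, d_shift]
      ring
    · exact (cRB S h σ₂ ξ ψ hψ).symm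
    · exact cBB S h ξ ξ₂ ψ
    · exact cBG S h ξ ζ₂ ψ hψ
    · funext x
      obtain ⟨a, b, c⟩ := x
      simp only [gaussR, gaussB, gaussG, fluxR, fluxB, fluxG, d_shift]
      ring
    · funext x
      obtain ⟨a, b, c⟩ := x
      simp only [gaussR, gaussB, gaussG, fluxR, fluxB, fluxG, d_shift]
      ring
    · funext x
      obtain ⟨a, b, c⟩ := x
      simp only [gaussR, gaussB, gaussG, fluxR, fluxB, fluxG, d_shift]
      ring
    · exact (cRG S h σ₂ ζ ψ hψ).symm
    · exact (cBG S h ξ₂ ζ ψ hψ).symm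
    · exact cGG S h ζ ζ₂ ψ
    · funext x
      obtain ⟨a, b, c⟩ := x
      simp only [gaussR, gaussB, gaussG, fluxR, fluxB, fluxG, d_shift]
      ring
    · funext x
      obtain ⟨a, b, c⟩ := x
      simp only [gaussR, gaussB, gaussG, fluxR, fluxB, fluxG, d_shift]
      ring
    · funext x
      obtain ⟨a, b, c⟩ := x
      simp only [gaussR, gaussB, gaussG, fluxR, fluxB, fluxG, d_shift]
      ring
    · funext x
      obtain ⟨a, b, c⟩ := x
      simp only [gaussR, gaussB, gaussG, fluxR, fluxB, fluxG, d_shift]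
      ring
    · funext x
      obtain ⟨a, b, c⟩ := x
      simp only [gaussR, gaussB, gaussG, fluxR, fluxB, fluxG, d_shift]
      ring
    · funext x
      obtain ⟨a, b, c⟩ := x
      simp only [gaussR, gaussB, gaussG, fluxR, fluxB, fluxG, d_shift]
      ring
    · funext x
      obtain ⟨a, b, c⟩ := x
      simp only [gaussR, gaussB, gaussG, fluxR, fluxB, fluxG, d_shift]
      ring
    · funext x
      obtain ⟨a, b, c⟩ := x
      simp only [gaussR, gaussB, gaussG, fluxR, fluxB, fluxG, d_shift]
      ring
    · funext x
      obtain ⟨a, b, c⟩ := x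
      simp only [gaussR, gaussB, gaussG, fluxR, fluxB, fluxG, d_shift]
      ring
    · funext x
      obtain ⟨a, b, c⟩ := x
      simp only [gaussR, gaussB, gaussG, fluxR, fluxB, fluxG, d_shift]
      ring
    · funext x
      obtain ⟨a, b, c⟩ := x
      simp only [gaussR, gaussB, gaussG, fluxR, fluxB, fluxG, d_shift]
      ring
    · funext x
      obtain ⟨a, b, c⟩ := x
      simp only [gaussR, gaussB, gaussG, fluxR, fluxB, fluxG, d_shift]
      ring
    · funext x
      obtain ⟨a, b, c⟩ := x
      simp only [gaussR, gaussB, gaussG, fluxR, fluxB, fluxG, d_shift]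
      ring
    · funext x
      obtain ⟨a, b, c⟩ := x
      simp only [gaussR, gaussB, gaussG, fluxR, fluxB, fluxG, d_shift]
      ring
    · funext x
      obtain ⟨a, b, c⟩ := x
      simp only [gaussR, gaussB, gaussG, fluxR, fluxB, fluxG, d_shift]
      ring
    · funext x
      obtain ⟨a, b, c⟩ := x
      simp only [gaussR, gaussB, gaussG, fluxR, fluxB, fluxG, d_shift]
      ring
    · funext x
      obtain ⟨a, b, c⟩ := x
      simp only [gaussR, gaussB, gaussG, fluxR, fluxB, fluxG, d_shift]
      ring
    · funext x
      obtain ⟨a, b, c⟩ := x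
      simp only [gaussR, gaussB, gaussG, fluxR, fluxB, fluxG, d_shift]
      ring
    · funext x
      obtain ⟨a, b, c⟩ := x
      simp only [gaussR, gaussB, gaussG, fluxR, fluxB, fluxG, d_shift]
      ring
    · funext x
      obtain ⟨a, b, c⟩ := x
      simp only [gaussR, gaussB, gaussG, fluxR, fluxB, fluxG, d_shift]
      ring
    · funext x
      obtain ⟨a, b, c⟩ := x
      simp only [gaussR, gaussB, gaussG, fluxR, fluxB, fluxG, d_shift]
      ring
  have hsupp : ∀ ψ ∈ CodeSpace S h, ψ ∈ ZeroFlux S p q s := by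
    intro ψ hψ x hx
    obtain ⟨-, -, -, hfR, hfB, hfG⟩ := hψ
    have hflat : ∀ {t : ZMod 2}, sgn t * ψ x = ψ x → t = 0 := by
      intro t ht
      have h0 : (sgn t - 1) * ψ x = 0 := by linear_combination ht
      rcases mul_eq_zero.mp h0 with h1 | h1
      · exact (sgn_eq_one_iff t).mp (by linear_combination h1)
      · exact absurd h1 hx
    refine ⟨funext fun τ => ?_, funext fun τ' => ?_, funext fun τ'' => ?_⟩
    · exact hflat (congrFun (hfR τ) x)
    · exact hflat (congrFun (hfB τ') x)
    · exact hflat (congrFun (hfG τ'') x)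
  exact ⟨hpres, hcomm, hsupp,
    fun O₁ hO₁ O₂ hO₂ ψ hψ => hcomm O₁ hO₁ O₂ hO₂ ψ (hsupp ψ hψ)⟩
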